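/- Let F₁, F₂: [0,∞) → [0,∞) be C² convex with F_j(0) = F_j'(0) = 0, and let h: [0,∞)² → ℝ be C² with h and its first partial derivatives vanishing on the boundary of the nonnegative quadrant. Assume |∂_{r_i}∂_{r_j} h(r₁,r₂)| ≤ κ_{j,i} F_i''(r_i) for all (r₁,r₂) in the nonnegative quadrant and all i,j ∈ {1,2}, with constants κ_{j,i} > 0. Then there exists ε₀ > 0 such that for every 0 < ε ≤ ε₀ the function (r₁,r₂) ↦ F₁(r₁) + F₂(r₂) + 2ε h(r₁,r₂) is convex on the nonnegative quadrant, and strictly convex if ε < ε₀ and F₁'', F₂'' are strictly positive on (0,∞). -/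

import Mathlib

open Set

/-- Total differentiability from partial derivatives, the first of which is continuous,
at an interior point of the nonnegative quadrant. -/
lemma hasFDerivAt_of_partials (k k₁ k₂ : ℝ → ℝ → ℝ) {a b : ℝ}
    (ha : 0 < a) (hb : 0 < b)
    (hd1 : ∀ x ≥ (0:ℝ), ∀ y ≥ (0:ℝ), HasDerivAt (fun t => k t y) (k₁ x y) x)
    (hd2 : ∀ x ≥ (0:ℝ), ∀ y ≥ (0:ℝ), HasDerivAt (fun t => k x t) (k₂ x y) y)
    (hc1 : ContinuousOn (fun p : ℝ × ℝ => k₁ p.1 p.2) (Set.Ici 0 ×ˢ Set.Ici 0)) :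
    HasFDerivAt (fun q : ℝ × ℝ => k q.1 q.2)
      (k₁ a b • ContinuousLinearMap.fst ℝ ℝ ℝ + k₂ a b • ContinuousLinearMap.snd ℝ ℝ ℝ)
      (a, b) := by
  have hB : HasFDerivAt (fun q : ℝ × ℝ => k a q.2)
      (k₂ a b • ContinuousLinearMap.snd ℝ ℝ ℝ) (a, b) := by
    have h0 : HasFDerivAt (fun t : ℝ => k a t)
        ((1 : ℝ →L[ℝ] ℝ).smulRight (k₂ a b)) b := (hd2 a ha.le b hb.le).hasFDerivAt
    have := h0.comp (a, b) (hasFDerivAt_snd (𝕜 := ℝ) (E := ℝ) (F := ℝ))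
    refine this.congr_fderiv ?_
    refine ContinuousLinearMap.ext fun p => ?_
    simp [mul_comm]
  have hBo := hB.isLittleO
  refine HasFDerivAt.of_isLittleO ?_
  have hA : (fun q : ℝ × ℝ => k q.1 q.2 - k a q.2 - k₁ a b * (q.1 - a))
      =o[nhds (a, b)] (fun q : ℝ × ℝ => q - (a, b)) := by
    rw [Asymptotics.isLittleO_iff]
    intro c hc
    have hmem : Set.Ici (0:ℝ) ×ˢ Set.Ici (0:ℝ) ∈ nhds ((a : ℝ), (b : ℝ)) :=
      prod_mem_nhds (Ici_mem_nhds ha) (Ici_mem_nhds hb)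
    have hk₁cont : ContinuousAt (fun p : ℝ × ℝ => k₁ p.1 p.2) (a, b) :=
      (hc1 (a, b) ⟨ha.le, hb.le⟩).continuousAt hmem
    have h1 : ∀ᶠ p : ℝ × ℝ in nhds (a, b), dist (k₁ p.1 p.2) (k₁ a b) < c :=
      Metric.tendsto_nhds.1 hk₁cont c hc
    have h2 : ∀ᶠ p : ℝ × ℝ in nhds (a, b), 0 < p.1 ∧ 0 < p.2 := by
      filter_upwards [(continuous_fst.tendsto ((a : ℝ), (b : ℝ))).eventually
          (eventually_gt_nhds ha),
        (continuous_snd.tendsto ((a : ℝ), (b : ℝ))).eventually (eventually_gt_nhds hb)]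
        with p hp1 hp2
      exact ⟨hp1, hp2⟩
    rcases Metric.eventually_nhds_iff_ball.1 (h1.and h2) with ⟨δ, hδ, hball⟩
    rw [Metric.eventually_nhds_iff_ball]
    refine ⟨δ, hδ, fun p hp => ?_⟩
    -- mean value inequality on the segment from a to p.1 at height p.2
    have hp2pos : 0 < p.2 := (hball p hp).2.2
    set s : Set ℝ := Icc (min a p.1) (max a p.1) with hs
    have hxmem : ∀ x ∈ s, ((x : ℝ), p.2) ∈ Metric.ball ((a : ℝ), (b : ℝ)) δ := by
      intro x hx
      have hxa : |x - a| ≤ |p.1 - a| := by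
        rcases le_total a p.1 with hle | hle
        · rw [abs_of_nonneg (by simp [hs, hle] at hx; linarith [hx.1])]
          rw [abs_of_nonneg (by linarith)]
          simp [hs, hle] at hx
          linarith [hx.2]
        · rw [abs_of_nonpos (by simp [hs, hle] at hx; linarith [hx.2])]
          rw [abs_of_nonpos (by linarith)]
          simp [hs, hle] at hx
          linarith [hx.1]
      have hdp : dist p ((a : ℝ), (b : ℝ)) < δ := hp
      rw [Metric.mem_ball, Prod.dist_eq]
      rw [Prod.dist_eq] at hdp
      simp only [Real.dist_eq] at hdp ⊢
      exact max_lt (lt_of_le_of_lt hxa (lt_of_le_of_lt (le_max_left _ _) hdp))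
        (lt_of_le_of_lt (le_max_right _ _) hdp)
    have hxnn : ∀ x ∈ s, (0:ℝ) < x := fun x hx => (hball _ (hxmem x hx)).2.1
    -- the function φ
    have hφ : ∀ x ∈ s, HasDerivWithinAt (fun t => k t p.2 - k₁ a b * t)
        (k₁ x p.2 - k₁ a b) s x := by
      intro x hx
      exact ((hd1 x (hxnn x hx).le p.2 hp2pos.le).sub
        ((hasDerivAt_id x).const_mul (k₁ a b) |>.congr_deriv (mul_one _))).hasDerivWithinAt
    have hbound : ∀ x ∈ s, ‖k₁ x p.2 - k₁ a b‖ ≤ c := by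
      intro x hx
      have := (hball _ (hxmem x hx)).1
      rw [Real.dist_eq] at this
      exact le_of_lt this
    have hmvt := (convex_Icc _ _).norm_image_sub_le_of_norm_hasDerivWithin_le hφ hbound
      (by simp [hs] : a ∈ s) (by simp [hs] : p.1 ∈ s)
    have : ‖k p.1 p.2 - k a p.2 - k₁ a b * (p.1 - a)‖ ≤ c * ‖p.1 - a‖ := by
      have e : k p.1 p.2 - k₁ a b * p.1 - (k a p.2 - k₁ a b * a)
          = k p.1 p.2 - k a p.2 - k₁ a b * (p.1 - a) := by ring
      rw [← e]; exact hmvt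
    refine this.trans ?_
    have : ‖p.1 - a‖ ≤ ‖p - ((a : ℝ), (b : ℝ))‖ := by
      have := norm_fst_le (p - ((a : ℝ), (b : ℝ)))
      simpa using this
    exact mul_le_mul_of_nonneg_left this hc.le
  have := hA.add hBo
  apply this.congr' _ (Filter.EventuallyEq.refl _ _)
  apply Filter.Eventually.of_forall
  intro q
  simp only [ContinuousLinearMap.add_apply, ContinuousLinearMap.smul_apply,
    ContinuousLinearMap.coe_fst', ContinuousLinearMap.coe_snd', Prod.fst_sub, Prod.snd_sub,
    smul_eq_mul]
  ring

set_option synthInstance.maxHeartbeats 1000000 in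
set_option maxHeartbeats 1000000 in
lemma mixed_partials_symm (h h₁ h₂ h₁₁ h₁₂ h₂₁ h₂₂ : ℝ → ℝ → ℝ)
    (hh₁ : ∀ r₁ ≥ (0:ℝ), ∀ r₂ ≥ (0:ℝ), HasDerivAt (fun t => h t r₂) (h₁ r₁ r₂) r₁)
    (hh₂ : ∀ r₁ ≥ (0:ℝ), ∀ r₂ ≥ (0:ℝ), HasDerivAt (fun t => h r₁ t) (h₂ r₁ r₂) r₂)
    (hh₁₁ : ∀ r₁ ≥ (0:ℝ), ∀ r₂ ≥ (0:ℝ), HasDerivAt (fun t => h₁ t r₂) (h₁₁ r₁ r₂) r₁)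
    (hh₁₂ : ∀ r₁ ≥ (0:ℝ), ∀ r₂ ≥ (0:ℝ), HasDerivAt (fun t => h₁ r₁ t) (h₁₂ r₁ r₂) r₂)
    (hh₂₁ : ∀ r₁ ≥ (0:ℝ), ∀ r₂ ≥ (0:ℝ), HasDerivAt (fun t => h₂ t r₂) (h₂₁ r₁ r₂) r₁)
    (hh₂₂ : ∀ r₁ ≥ (0:ℝ), ∀ r₂ ≥ (0:ℝ), HasDerivAt (fun t => h₂ r₁ t) (h₂₂ r₁ r₂) r₂)
    (hh₁c : ContinuousOn (fun p : ℝ × ℝ => h₁ p.1 p.2) (Set.Ici (0:ℝ) ×ˢ Set.Ici (0:ℝ)))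
    (hh₁₁c : ContinuousOn (fun p : ℝ × ℝ => h₁₁ p.1 p.2) (Set.Ici (0:ℝ) ×ˢ Set.Ici (0:ℝ)))
    (hh₂₁c : ContinuousOn (fun p : ℝ × ℝ => h₂₁ p.1 p.2) (Set.Ici (0:ℝ) ×ˢ Set.Ici (0:ℝ)))
    {a b : ℝ} (ha : 0 < a) (hb : 0 < b) : h₁₂ a b = h₂₁ a b := by
  set L : ℝ × ℝ → ℝ × ℝ →L[ℝ] ℝ := fun p =>
    h₁ p.1 p.2 • ContinuousLinearMap.fst ℝ ℝ ℝ + h₂ p.1 p.2 • ContinuousLinearMap.snd ℝ ℝ ℝ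
    with hLdef
  have hL : ∀ p : ℝ × ℝ, 0 < p.1 → 0 < p.2 →
      HasFDerivAt (fun q : ℝ × ℝ => h q.1 q.2) (L p) p := by
    intro p h1 h2
    have := hasFDerivAt_of_partials h h₁ h₂ h1 h2 hh₁ hh₂ hh₁c
    simpa [hLdef] using this
  have hev : ∀ᶠ y in nhds ((a : ℝ), (b : ℝ)), HasFDerivAt (fun q : ℝ × ℝ => h q.1 q.2) (L y) y := by
    filter_upwards [(continuous_fst.tendsto ((a : ℝ), (b : ℝ))).eventually (eventually_gt_nhds ha),
      (continuous_snd.tendsto ((a : ℝ), (b : ℝ))).eventually (eventually_gt_nhds hb)]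
      with p hp1 hp2
    exact hL p hp1 hp2
  have hL1 : HasFDerivAt (fun p : ℝ × ℝ => h₁ p.1 p.2)
      (h₁₁ a b • ContinuousLinearMap.fst ℝ ℝ ℝ + h₁₂ a b • ContinuousLinearMap.snd ℝ ℝ ℝ)
      ((a : ℝ), (b : ℝ)) := hasFDerivAt_of_partials h₁ h₁₁ h₁₂ ha hb hh₁₁ hh₁₂ hh₁₁c
  have hL2 : HasFDerivAt (fun p : ℝ × ℝ => h₂ p.1 p.2)
      (h₂₁ a b • ContinuousLinearMap.fst ℝ ℝ ℝ + h₂₂ a b • ContinuousLinearMap.snd ℝ ℝ ℝ)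
      ((a : ℝ), (b : ℝ)) := hasFDerivAt_of_partials h₂ h₂₁ h₂₂ ha hb hh₂₁ hh₂₂ hh₂₁c
  have hB : HasFDerivAt L
      (((h₁ a b : ℝ) • (0 : (ℝ × ℝ) →L[ℝ] ((ℝ × ℝ) →L[ℝ] ℝ)) +
        (h₁₁ a b • ContinuousLinearMap.fst ℝ ℝ ℝ +
          h₁₂ a b • ContinuousLinearMap.snd ℝ ℝ ℝ).smulRight (ContinuousLinearMap.fst ℝ ℝ ℝ)) +
       ((h₂ a b : ℝ) • (0 : (ℝ × ℝ) →L[ℝ] ((ℝ × ℝ) →L[ℝ] ℝ)) +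
        (h₂₁ a b • ContinuousLinearMap.fst ℝ ℝ ℝ +
          h₂₂ a b • ContinuousLinearMap.snd ℝ ℝ ℝ).smulRight (ContinuousLinearMap.snd ℝ ℝ ℝ)))
      ((a : ℝ), (b : ℝ)) :=
    (hL1.smul (hasFDerivAt_const _ _)).add (hL2.smul (hasFDerivAt_const (ContinuousLinearMap.snd ℝ ℝ ℝ) _))
  have key := second_derivative_symmetric_of_eventually_of_real hev hB
    ((1 : ℝ), (0 : ℝ)) ((0 : ℝ), (1 : ℝ))
  simpa using key.symm


open Set

lemma strictConvexOn_aux {D : Set ℝ} (hD : Convex ℝ D) {f f' f'' : ℝ → ℝ}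
    (hf : ContinuousOn f D) (hf' : ∀ x ∈ interior D, HasDerivAt f (f' x) x)
    (hf'' : ∀ x ∈ interior D, HasDerivAt f' (f'' x) x)
    (pos : ∀ x ∈ interior D, 0 < f'' x) : StrictConvexOn ℝ D f := by
  apply strictConvexOn_of_deriv2_pos hD hf
  intro x hx
  have hev : deriv f =ᶠ[nhds x] f' := by
    filter_upwards [isOpen_interior.mem_nhds hx] with y hy using (hf' y hy).deriv
  have h2 : deriv (deriv f) x = deriv f' x := hev.deriv_eq
  have : deriv^[2] f x = deriv (deriv f) x := by
    simp [Function.iterate_succ, Function.comp]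
  rw [this, h2, (hf'' x hx).deriv]
  exact pos x hx


lemma key_ineq (κ₁₁ κ₁₂ κ₂₁ κ₂₂ ε A B H11 H12 H21 H22 u₁ u₂ : ℝ)
    (hε : 0 < ε) (hA : 0 ≤ A) (hB : 0 ≤ B)
    (hk11 : 0 ≤ κ₁₁) (hk12 : 0 ≤ κ₁₂) (hk21 : 0 ≤ κ₂₁) (hk22 : 0 ≤ κ₂₂)
    (h11 : |H11| ≤ κ₁₁ * A) (h22 : |H22| ≤ κ₂₂ * B)
    (h12 : |H12| ≤ κ₁₂ * B) (h21 : |H21| ≤ κ₂₁ * A) (hsym : H12 = H21) :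
    (1 - 2 * ε * (κ₁₁ + κ₁₂ + κ₂₁ + κ₂₂)) * (u₁ ^ 2 * A + u₂ ^ 2 * B) ≤
      u₁ ^ 2 * A + u₂ ^ 2 * B +
        2 * ε * (u₁ ^ 2 * H11 + u₁ * u₂ * H12 + u₁ * u₂ * H21 + u₂ ^ 2 * H22) := by
  subst hsym
  have e1 : -(κ₁₁ * A) * u₁ ^ 2 ≤ H11 * u₁ ^ 2 :=
    mul_le_mul_of_nonneg_right (by linarith [neg_abs_le H11]) (sq_nonneg u₁)
  have e4 : -(κ₂₂ * B) * u₂ ^ 2 ≤ H22 * u₂ ^ 2 :=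
    mul_le_mul_of_nonneg_right (by linarith [neg_abs_le H22]) (sq_nonneg u₂)
  -- cross term: 2 u₁ u₂ H12 ≥ -(u₁² |H12| + u₂² |H12|)
  have s1 : -(u₁ ^ 2 * |H12| + u₂ ^ 2 * |H12|) ≤ 2 * (u₁ * u₂) * H12 := by
    nlinarith [mul_nonneg (sq_nonneg (u₁ + u₂)) (by linarith [neg_abs_le H12] : (0:ℝ) ≤ |H12| + H12),
      mul_nonneg (sq_nonneg (u₁ - u₂)) (by linarith [le_abs_self H12] : (0:ℝ) ≤ |H12| - H12)]
  have s2 : u₁ ^ 2 * |H12| ≤ u₁ ^ 2 * (κ₂₁ * A) :=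
    mul_le_mul_of_nonneg_left h21 (sq_nonneg u₁)
  have s3 : u₂ ^ 2 * |H12| ≤ u₂ ^ 2 * (κ₁₂ * B) :=
    mul_le_mul_of_nonneg_left h12 (sq_nonneg u₂)
  have cross : -(u₁ ^ 2 * (κ₂₁ * A) + u₂ ^ 2 * (κ₁₂ * B)) ≤ 2 * (u₁ * u₂) * H12 := by
    linarith
  -- leftover positive terms
  have p1 : 0 ≤ κ₁₂ * (u₁ ^ 2 * A) := by positivity
  have p2 : 0 ≤ κ₂₁ * (u₂ ^ 2 * B) := by positivity
  have p3 : 0 ≤ κ₂₂ * (u₁ ^ 2 * A) := by positivity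
  have p4 : 0 ≤ κ₁₁ * (u₂ ^ 2 * B) := by positivity
  nlinarith [mul_le_mul_of_nonneg_left e1 hε.le, mul_le_mul_of_nonneg_left e4 hε.le,
    mul_le_mul_of_nonneg_left cross hε.le,
    mul_nonneg hε.le p1, mul_nonneg hε.le p2, mul_nonneg hε.le p3, mul_nonneg hε.le p4]



set_option maxHeartbeats 2000000 in
set_option synthInstance.maxHeartbeats 1000000 in
/-- For small enough `ε₀ > 0`, the function `(r₁,r₂) ↦ F₁(r₁) + F₂(r₂) + 2ε h(r₁,r₂)`
is convex on the nonnegative quadrant for every `0 < ε ≤ ε₀`, and strictly convex if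
`ε < ε₀` and `F₁'', F₂''` are strictly positive on `(0,∞)`. -/
theorem stmt2 (F₁ F₂ F₁' F₂' F₁'' F₂'' : ℝ → ℝ)
    (h h₁ h₂ h₁₁ h₁₂ h₂₁ h₂₂ : ℝ → ℝ → ℝ)
    (κ₁₁ κ₁₂ κ₂₁ κ₂₂ : ℝ)
    (hκ₁₁ : 0 < κ₁₁) (hκ₁₂ : 0 < κ₁₂) (hκ₂₁ : 0 < κ₂₁) (hκ₂₂ : 0 < κ₂₂)
    (hF₁0 : F₁ 0 = 0) (hF₁'0 : F₁' 0 = 0) (hF₂0 : F₂ 0 = 0) (hF₂'0 : F₂' 0 = 0)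
    (hF₁nn : ∀ r ≥ (0:ℝ), 0 ≤ F₁ r) (hF₂nn : ∀ r ≥ (0:ℝ), 0 ≤ F₂ r)
    (hF₁d : ∀ r ≥ (0:ℝ), HasDerivAt F₁ (F₁' r) r)
    (hF₁'d : ∀ r ≥ (0:ℝ), HasDerivAt F₁' (F₁'' r) r)
    (hF₂d : ∀ r ≥ (0:ℝ), HasDerivAt F₂ (F₂' r) r)
    (hF₂'d : ∀ r ≥ (0:ℝ), HasDerivAt F₂' (F₂'' r) r)
    (hF₁''c : ContinuousOn F₁'' (Set.Ici (0:ℝ)))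
    (hF₂''c : ContinuousOn F₂'' (Set.Ici (0:ℝ)))
    (hF₁''nn : ∀ r ≥ (0:ℝ), 0 ≤ F₁'' r) (hF₂''nn : ∀ r ≥ (0:ℝ), 0 ≤ F₂'' r)
    -- first partial derivatives of h on the quadrant
    (hh₁ : ∀ r₁ ≥ (0:ℝ), ∀ r₂ ≥ (0:ℝ), HasDerivAt (fun t => h t r₂) (h₁ r₁ r₂) r₁)
    (hh₂ : ∀ r₁ ≥ (0:ℝ), ∀ r₂ ≥ (0:ℝ), HasDerivAt (fun t => h r₁ t) (h₂ r₁ r₂) r₂)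
    -- second partial derivatives of h on the quadrant
    (hh₁₁ : ∀ r₁ ≥ (0:ℝ), ∀ r₂ ≥ (0:ℝ), HasDerivAt (fun t => h₁ t r₂) (h₁₁ r₁ r₂) r₁)
    (hh₁₂ : ∀ r₁ ≥ (0:ℝ), ∀ r₂ ≥ (0:ℝ), HasDerivAt (fun t => h₁ r₁ t) (h₁₂ r₁ r₂) r₂)
    (hh₂₁ : ∀ r₁ ≥ (0:ℝ), ∀ r₂ ≥ (0:ℝ), HasDerivAt (fun t => h₂ t r₂) (h₂₁ r₁ r₂) r₁)
    (hh₂₂ : ∀ r₁ ≥ (0:ℝ), ∀ r₂ ≥ (0:ℝ), HasDerivAt (fun t => h₂ r₁ t) (h₂₂ r₁ r₂) r₂)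
    -- C² regularity: continuity of h and its partial derivatives on the quadrant
    (hhc : ContinuousOn (fun p : ℝ × ℝ => h p.1 p.2) (Set.Ici (0:ℝ) ×ˢ Set.Ici (0:ℝ)))
    (hh₁c : ContinuousOn (fun p : ℝ × ℝ => h₁ p.1 p.2) (Set.Ici (0:ℝ) ×ˢ Set.Ici (0:ℝ)))
    (hh₂c : ContinuousOn (fun p : ℝ × ℝ => h₂ p.1 p.2) (Set.Ici (0:ℝ) ×ˢ Set.Ici (0:ℝ)))
    (hh₁₁c : ContinuousOn (fun p : ℝ × ℝ => h₁₁ p.1 p.2) (Set.Ici (0:ℝ) ×ˢ Set.Ici (0:ℝ)))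
    (hh₁₂c : ContinuousOn (fun p : ℝ × ℝ => h₁₂ p.1 p.2) (Set.Ici (0:ℝ) ×ˢ Set.Ici (0:ℝ)))
    (hh₂₁c : ContinuousOn (fun p : ℝ × ℝ => h₂₁ p.1 p.2) (Set.Ici (0:ℝ) ×ˢ Set.Ici (0:ℝ)))
    (hh₂₂c : ContinuousOn (fun p : ℝ × ℝ => h₂₂ p.1 p.2) (Set.Ici (0:ℝ) ×ˢ Set.Ici (0:ℝ)))
    -- the bounds |∂_{r_i}∂_{r_j} h| ≤ κ_{j,i} F_i''(r_i)
    (hbd₁₁ : ∀ r₁ ≥ (0:ℝ), ∀ r₂ ≥ (0:ℝ), |h₁₁ r₁ r₂| ≤ κ₁₁ * F₁'' r₁)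
    (hbd₂₁ : ∀ r₁ ≥ (0:ℝ), ∀ r₂ ≥ (0:ℝ), |h₂₁ r₁ r₂| ≤ κ₂₁ * F₁'' r₁)
    (hbd₁₂ : ∀ r₁ ≥ (0:ℝ), ∀ r₂ ≥ (0:ℝ), |h₁₂ r₁ r₂| ≤ κ₁₂ * F₂'' r₂)
    (hbd₂₂ : ∀ r₁ ≥ (0:ℝ), ∀ r₂ ≥ (0:ℝ), |h₂₂ r₁ r₂| ≤ κ₂₂ * F₂'' r₂)
    -- h and its first derivatives vanish on the boundary of the quadrant
    (hbdry : ∀ r ≥ (0:ℝ), h r 0 = 0 ∧ h 0 r = 0 ∧ h₁ r 0 = 0 ∧ h₁ 0 r = 0 ∧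
      h₂ r 0 = 0 ∧ h₂ 0 r = 0) :
    ∃ ε₀ > (0:ℝ), ∀ ε : ℝ, 0 < ε → ε ≤ ε₀ →
      ConvexOn ℝ (Set.Ici (0:ℝ) ×ˢ Set.Ici (0:ℝ))
        (fun p : ℝ × ℝ => F₁ p.1 + F₂ p.2 + 2 * ε * h p.1 p.2) ∧
      (ε < ε₀ → (∀ r > (0:ℝ), 0 < F₁'' r) → (∀ r > (0:ℝ), 0 < F₂'' r) →
        StrictConvexOn ℝ (Set.Ici (0:ℝ) ×ˢ Set.Ici (0:ℝ))
          (fun p : ℝ × ℝ => F₁ p.1 + F₂ p.2 + 2 * ε * h p.1 p.2)) := by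
  classical
  have hK : 0 < κ₁₁ + κ₁₂ + κ₂₁ + κ₂₂ := by linarith
  refine ⟨1 / (2 * (κ₁₁ + κ₁₂ + κ₂₁ + κ₂₂)), by positivity, ?_⟩
  intro ε hε hεle
  -- basic continuity
  have hF₁cont : ContinuousOn F₁ (Set.Ici (0:ℝ)) :=
    fun r hr => (hF₁d r hr).continuousAt.continuousWithinAt
  have hF₂cont : ContinuousOn F₂ (Set.Ici (0:ℝ)) :=
    fun r hr => (hF₂d r hr).continuousAt.continuousWithinAt
  have hQ : Convex ℝ (Set.Ici (0:ℝ) ×ˢ Set.Ici (0:ℝ)) := (convex_Ici 0).prod (convex_Ici 0)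
  have hfc : ContinuousOn (fun p : ℝ × ℝ => F₁ p.1 + F₂ p.2 + 2 * ε * h p.1 p.2)
      (Set.Ici (0:ℝ) ×ˢ Set.Ici (0:ℝ)) :=
    ((hF₁cont.comp continuousOn_fst (fun p hp => hp.1)).add
      (hF₂cont.comp continuousOn_snd (fun p hp => hp.2))).add (continuousOn_const.mul hhc)
  -- total derivatives of h, h₁, h₂ at interior points
  have hDh : ∀ p : ℝ × ℝ, 0 < p.1 → 0 < p.2 →
      HasFDerivAt (fun q : ℝ × ℝ => h q.1 q.2)
        (h₁ p.1 p.2 • ContinuousLinearMap.fst ℝ ℝ ℝ +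
          h₂ p.1 p.2 • ContinuousLinearMap.snd ℝ ℝ ℝ) p := fun p h1 h2 => by
    simpa using hasFDerivAt_of_partials h h₁ h₂ h1 h2 hh₁ hh₂ hh₁c
  have hDh1 : ∀ p : ℝ × ℝ, 0 < p.1 → 0 < p.2 →
      HasFDerivAt (fun q : ℝ × ℝ => h₁ q.1 q.2)
        (h₁₁ p.1 p.2 • ContinuousLinearMap.fst ℝ ℝ ℝ +
          h₁₂ p.1 p.2 • ContinuousLinearMap.snd ℝ ℝ ℝ) p := fun p h1 h2 => by
    simpa using hasFDerivAt_of_partials h₁ h₁₁ h₁₂ h1 h2 hh₁₁ hh₁₂ hh₁₁c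
  have hDh2 : ∀ p : ℝ × ℝ, 0 < p.1 → 0 < p.2 →
      HasFDerivAt (fun q : ℝ × ℝ => h₂ q.1 q.2)
        (h₂₁ p.1 p.2 • ContinuousLinearMap.fst ℝ ℝ ℝ +
          h₂₂ p.1 p.2 • ContinuousLinearMap.snd ℝ ℝ ℝ) p := fun p h1 h2 => by
    simpa using hasFDerivAt_of_partials h₂ h₂₁ h₂₂ h1 h2 hh₂₁ hh₂₂ hh₂₁c
  have hsymm : ∀ a b : ℝ, 0 < a → 0 < b → h₁₂ a b = h₂₁ a b := fun a b ha hb =>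
    mixed_partials_symm h h₁ h₂ h₁₁ h₁₂ h₂₁ h₂₂ hh₁ hh₂ hh₁₁ hh₁₂ hh₂₁ hh₂₂ hh₁c hh₁₁c hh₂₁c ha hb
  -- 1D convexity of F₁, F₂
  have hF₁cvx : ConvexOn ℝ (Set.Ici (0:ℝ)) F₁ := by
    refine convexOn_of_hasDerivWithinAt2_nonneg (convex_Ici 0) hF₁cont
      (f' := F₁') (f'' := F₁'') ?_ ?_ ?_ <;> intro r hr <;> rw [interior_Ici] at hr
    · exact (hF₁d r hr.le).hasDerivWithinAt
    · exact (hF₁'d r hr.le).hasDerivWithinAt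
    · exact hF₁''nn r hr.le
  have hF₂cvx : ConvexOn ℝ (Set.Ici (0:ℝ)) F₂ := by
    refine convexOn_of_hasDerivWithinAt2_nonneg (convex_Ici 0) hF₂cont
      (f' := F₂') (f'' := F₂'') ?_ ?_ ?_ <;> intro r hr <;> rw [interior_Ici] at hr
    · exact (hF₂d r hr.le).hasDerivWithinAt
    · exact (hF₂'d r hr.le).hasDerivWithinAt
    · exact hF₂''nn r hr.le
  have h2eK : 2 * ε * (κ₁₁ + κ₁₂ + κ₂₁ + κ₂₂) ≤ 1 := by
    have h2K : (0:ℝ) < 2 * (κ₁₁ + κ₁₂ + κ₂₁ + κ₂₂) := by positivity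
    have := mul_le_mul_of_nonneg_right hεle h2K.le
    rw [one_div] at this
    rw [inv_mul_cancel₀ (ne_of_gt h2K)] at this
    linarith
  -- the core segment lemma
  have core : ∀ x ∈ Set.Ici (0:ℝ) ×ˢ Set.Ici (0:ℝ), ∀ y ∈ Set.Ici (0:ℝ) ×ˢ Set.Ici (0:ℝ),
      ¬(x.1 = 0 ∧ y.1 = 0) → ¬(x.2 = 0 ∧ y.2 = 0) →
      ConvexOn ℝ (Set.Icc (0:ℝ) 1) (fun t => F₁ (x.1 + t * (y.1 - x.1)) +
          F₂ (x.2 + t * (y.2 - x.2)) +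
          2 * ε * h (x.1 + t * (y.1 - x.1)) (x.2 + t * (y.2 - x.2))) ∧
      (ε < 1 / (2 * (κ₁₁ + κ₁₂ + κ₂₁ + κ₂₂)) → (∀ r > (0:ℝ), 0 < F₁'' r) →
        (∀ r > (0:ℝ), 0 < F₂'' r) → x ≠ y →
        StrictConvexOn ℝ (Set.Icc (0:ℝ) 1) (fun t => F₁ (x.1 + t * (y.1 - x.1)) +
          F₂ (x.2 + t * (y.2 - x.2)) +
          2 * ε * h (x.1 + t * (y.1 - x.1)) (x.2 + t * (y.2 - x.2)))) := by
    intro x hx y hy hc1 hc2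
    obtain ⟨hx1, hx2⟩ := hx
    obtain ⟨hy1, hy2⟩ := hy
    simp only [Set.mem_Ici] at hx1 hx2 hy1 hy2
    -- membership of the segment point coordinates
    have hzc : ∀ s : ℝ, s ∈ Set.Icc (0:ℝ) 1 →
        0 ≤ x.1 + s * (y.1 - x.1) ∧ 0 ≤ x.2 + s * (y.2 - x.2) := by
      intro s hs
      constructor
      · nlinarith [mul_nonneg (by linarith [hs.2] : (0:ℝ) ≤ 1 - s) hx1, mul_nonneg hs.1 hy1]
      · nlinarith [mul_nonneg (by linarith [hs.2] : (0:ℝ) ≤ 1 - s) hx2, mul_nonneg hs.1 hy2]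
    have hzo : ∀ s : ℝ, s ∈ Set.Ioo (0:ℝ) 1 →
        0 < x.1 + s * (y.1 - x.1) ∧ 0 < x.2 + s * (y.2 - x.2) := by
      intro s hs
      constructor
      · rcases hx1.lt_or_eq with hlt | heq
        · nlinarith [mul_pos (by linarith [hs.2] : (0:ℝ) < 1 - s) hlt, mul_nonneg hs.1.le hy1]
        · have hy1' : 0 < y.1 := by
            rcases hy1.lt_or_eq with hlt' | heq'
            · exact hlt'
            · exact absurd ⟨heq.symm, heq'.symm⟩ hc1
          nlinarith [mul_pos hs.1 hy1']
      · rcases hx2.lt_or_eq with hlt | heq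
        · nlinarith [mul_pos (by linarith [hs.2] : (0:ℝ) < 1 - s) hlt, mul_nonneg hs.1.le hy2]
        · have hy2' : 0 < y.2 := by
            rcases hy2.lt_or_eq with hlt' | heq'
            · exact hlt'
            · exact absurd ⟨heq.symm, heq'.symm⟩ hc2
          nlinarith [mul_pos hs.1 hy2']
    -- derivatives of the coordinate lines
    have hc1' : ∀ s : ℝ, HasDerivAt (fun t : ℝ => x.1 + t * (y.1 - x.1)) (y.1 - x.1) s :=
      fun s => (hasDerivAt_mul_const _).const_add _
    have hc2' : ∀ s : ℝ, HasDerivAt (fun t : ℝ => x.2 + t * (y.2 - x.2)) (y.2 - x.2) s :=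
      fun s => (hasDerivAt_mul_const _).const_add _
    have hγ : ∀ s : ℝ, HasDerivAt
        (fun t : ℝ => ((x.1 + t * (y.1 - x.1), x.2 + t * (y.2 - x.2)) : ℝ × ℝ))
        ((y.1 - x.1, y.2 - x.2) : ℝ × ℝ) s := fun s => (hc1' s).prodMk (hc2' s)
    -- continuity of the segment function
    have hgc : ContinuousOn (fun t => F₁ (x.1 + t * (y.1 - x.1)) + F₂ (x.2 + t * (y.2 - x.2)) +
        2 * ε * h (x.1 + t * (y.1 - x.1)) (x.2 + t * (y.2 - x.2))) (Set.Icc (0:ℝ) 1) := by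
      have hcont : Continuous (fun t : ℝ =>
          ((x.1 + t * (y.1 - x.1), x.2 + t * (y.2 - x.2)) : ℝ × ℝ)) := by fun_prop
      have hmap : Set.MapsTo (fun t : ℝ =>
          ((x.1 + t * (y.1 - x.1), x.2 + t * (y.2 - x.2)) : ℝ × ℝ))
          (Set.Icc (0:ℝ) 1) (Set.Ici (0:ℝ) ×ˢ Set.Ici (0:ℝ)) := by
        intro s hs
        exact ⟨(hzc s hs).1, (hzc s hs).2⟩
      exact hfc.comp hcont.continuousOn hmap
    -- first derivative of the segment function
    have hg' : ∀ s ∈ Set.Ioo (0:ℝ) 1, HasDerivAt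
        (fun t => F₁ (x.1 + t * (y.1 - x.1)) + F₂ (x.2 + t * (y.2 - x.2)) +
          2 * ε * h (x.1 + t * (y.1 - x.1)) (x.2 + t * (y.2 - x.2)))
        (F₁' (x.1 + s * (y.1 - x.1)) * (y.1 - x.1) + F₂' (x.2 + s * (y.2 - x.2)) * (y.2 - x.2) +
          2 * ε * (h₁ (x.1 + s * (y.1 - x.1)) (x.2 + s * (y.2 - x.2)) * (y.1 - x.1) +
            h₂ (x.1 + s * (y.1 - x.1)) (x.2 + s * (y.2 - x.2)) * (y.2 - x.2))) s := by
      intro s hs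
      obtain ⟨p1, p2⟩ := hzo s hs
      have d1 : HasDerivAt (fun t => F₁ (x.1 + t * (y.1 - x.1)))
          (F₁' (x.1 + s * (y.1 - x.1)) * (y.1 - x.1)) s :=
        (hF₁d _ p1.le).comp s (hc1' s)
      have d2 : HasDerivAt (fun t => F₂ (x.2 + t * (y.2 - x.2)))
          (F₂' (x.2 + s * (y.2 - x.2)) * (y.2 - x.2)) s :=
        (hF₂d _ p2.le).comp s (hc2' s)
      have dh0 := (hDh ((x.1 + s * (y.1 - x.1), x.2 + s * (y.2 - x.2)) : ℝ × ℝ)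
        p1 p2).comp_hasDerivAt s (hγ s)
      have dh : HasDerivAt (fun t => h (x.1 + t * (y.1 - x.1)) (x.2 + t * (y.2 - x.2)))
          (h₁ (x.1 + s * (y.1 - x.1)) (x.2 + s * (y.2 - x.2)) * (y.1 - x.1) +
            h₂ (x.1 + s * (y.1 - x.1)) (x.2 + s * (y.2 - x.2)) * (y.2 - x.2)) s := by
        exact dh0.congr_deriv (by simp [ContinuousLinearMap.add_apply, ContinuousLinearMap.smul_apply, smul_eq_mul])
      exact (d1.add d2).add (dh.const_mul (2 * ε))
    -- second derivative of the segment function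
    have hg'' : ∀ s ∈ Set.Ioo (0:ℝ) 1, HasDerivAt
        (fun t => F₁' (x.1 + t * (y.1 - x.1)) * (y.1 - x.1) +
          F₂' (x.2 + t * (y.2 - x.2)) * (y.2 - x.2) +
          2 * ε * (h₁ (x.1 + t * (y.1 - x.1)) (x.2 + t * (y.2 - x.2)) * (y.1 - x.1) +
            h₂ (x.1 + t * (y.1 - x.1)) (x.2 + t * (y.2 - x.2)) * (y.2 - x.2)))
        ((F₁'' (x.1 + s * (y.1 - x.1)) * (y.1 - x.1)) * (y.1 - x.1) +
          (F₂'' (x.2 + s * (y.2 - x.2)) * (y.2 - x.2)) * (y.2 - x.2) +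
          2 * ε * ((h₁₁ (x.1 + s * (y.1 - x.1)) (x.2 + s * (y.2 - x.2)) * (y.1 - x.1) +
              h₁₂ (x.1 + s * (y.1 - x.1)) (x.2 + s * (y.2 - x.2)) * (y.2 - x.2)) * (y.1 - x.1) +
            (h₂₁ (x.1 + s * (y.1 - x.1)) (x.2 + s * (y.2 - x.2)) * (y.1 - x.1) +
              h₂₂ (x.1 + s * (y.1 - x.1)) (x.2 + s * (y.2 - x.2)) * (y.2 - x.2)) * (y.2 - x.2)))
        s := by
      intro s hs
      obtain ⟨p1, p2⟩ := hzo s hs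
      have d1 : HasDerivAt (fun t => F₁' (x.1 + t * (y.1 - x.1)) * (y.1 - x.1))
          ((F₁'' (x.1 + s * (y.1 - x.1)) * (y.1 - x.1)) * (y.1 - x.1)) s :=
        ((hF₁'d _ p1.le).comp s (hc1' s)).mul_const _
      have d2 : HasDerivAt (fun t => F₂' (x.2 + t * (y.2 - x.2)) * (y.2 - x.2))
          ((F₂'' (x.2 + s * (y.2 - x.2)) * (y.2 - x.2)) * (y.2 - x.2)) s :=
        ((hF₂'d _ p2.le).comp s (hc2' s)).mul_const _
      have e1 : HasDerivAt (fun t => h₁ (x.1 + t * (y.1 - x.1)) (x.2 + t * (y.2 - x.2)))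
          (h₁₁ (x.1 + s * (y.1 - x.1)) (x.2 + s * (y.2 - x.2)) * (y.1 - x.1) +
            h₁₂ (x.1 + s * (y.1 - x.1)) (x.2 + s * (y.2 - x.2)) * (y.2 - x.2)) s := by
        have := (hDh1 ((x.1 + s * (y.1 - x.1), x.2 + s * (y.2 - x.2)) : ℝ × ℝ)
          p1 p2).comp_hasDerivAt s (hγ s)
        exact this.congr_deriv (by simp [ContinuousLinearMap.add_apply, ContinuousLinearMap.smul_apply, smul_eq_mul])
      have e2 : HasDerivAt (fun t => h₂ (x.1 + t * (y.1 - x.1)) (x.2 + t * (y.2 - x.2)))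
          (h₂₁ (x.1 + s * (y.1 - x.1)) (x.2 + s * (y.2 - x.2)) * (y.1 - x.1) +
            h₂₂ (x.1 + s * (y.1 - x.1)) (x.2 + s * (y.2 - x.2)) * (y.2 - x.2)) s := by
        have := (hDh2 ((x.1 + s * (y.1 - x.1), x.2 + s * (y.2 - x.2)) : ℝ × ℝ)
          p1 p2).comp_hasDerivAt s (hγ s)
        exact this.congr_deriv (by simp [ContinuousLinearMap.add_apply, ContinuousLinearMap.smul_apply, smul_eq_mul])
      exact (d1.add d2).add (((e1.mul_const _).add (e2.mul_const _)).const_mul (2 * ε))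
    -- lower bound on the second derivative
    have hging : ∀ s ∈ Set.Ioo (0:ℝ) 1,
        (1 - 2 * ε * (κ₁₁ + κ₁₂ + κ₂₁ + κ₂₂)) *
          ((y.1 - x.1) ^ 2 * F₁'' (x.1 + s * (y.1 - x.1)) +
            (y.2 - x.2) ^ 2 * F₂'' (x.2 + s * (y.2 - x.2))) ≤
        (F₁'' (x.1 + s * (y.1 - x.1)) * (y.1 - x.1)) * (y.1 - x.1) +
          (F₂'' (x.2 + s * (y.2 - x.2)) * (y.2 - x.2)) * (y.2 - x.2) +
          2 * ε * ((h₁₁ (x.1 + s * (y.1 - x.1)) (x.2 + s * (y.2 - x.2)) * (y.1 - x.1) +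
              h₁₂ (x.1 + s * (y.1 - x.1)) (x.2 + s * (y.2 - x.2)) * (y.2 - x.2)) * (y.1 - x.1) +
            (h₂₁ (x.1 + s * (y.1 - x.1)) (x.2 + s * (y.2 - x.2)) * (y.1 - x.1) +
              h₂₂ (x.1 + s * (y.1 - x.1)) (x.2 + s * (y.2 - x.2)) * (y.2 - x.2)) * (y.2 - x.2)) := by
      intro s hs
      obtain ⟨p1, p2⟩ := hzo s hs
      have key := key_ineq κ₁₁ κ₁₂ κ₂₁ κ₂₂ ε
        (F₁'' (x.1 + s * (y.1 - x.1))) (F₂'' (x.2 + s * (y.2 - x.2)))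
        (h₁₁ (x.1 + s * (y.1 - x.1)) (x.2 + s * (y.2 - x.2)))
        (h₁₂ (x.1 + s * (y.1 - x.1)) (x.2 + s * (y.2 - x.2)))
        (h₂₁ (x.1 + s * (y.1 - x.1)) (x.2 + s * (y.2 - x.2)))
        (h₂₂ (x.1 + s * (y.1 - x.1)) (x.2 + s * (y.2 - x.2)))
        (y.1 - x.1) (y.2 - x.2) hε (hF₁''nn _ p1.le) (hF₂''nn _ p2.le)
        hκ₁₁.le hκ₁₂.le hκ₂₁.le hκ₂₂.le
        (hbd₁₁ _ p1.le _ p2.le) (hbd₂₂ _ p1.le _ p2.le)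
        (hbd₁₂ _ p1.le _ p2.le) (hbd₂₁ _ p1.le _ p2.le)
        (hsymm _ _ p1 p2)
      nlinarith [key]
    have hFnn : ∀ s ∈ Set.Ioo (0:ℝ) 1,
        0 ≤ (y.1 - x.1) ^ 2 * F₁'' (x.1 + s * (y.1 - x.1)) +
          (y.2 - x.2) ^ 2 * F₂'' (x.2 + s * (y.2 - x.2)) := fun s hs =>
      add_nonneg (mul_nonneg (sq_nonneg _) (hF₁''nn _ (hzo s hs).1.le))
        (mul_nonneg (sq_nonneg _) (hF₂''nn _ (hzo s hs).2.le))
    constructor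
    · refine convexOn_of_hasDerivWithinAt2_nonneg (convex_Icc 0 1) hgc
        (f' := fun s => F₁' (x.1 + s * (y.1 - x.1)) * (y.1 - x.1) +
          F₂' (x.2 + s * (y.2 - x.2)) * (y.2 - x.2) +
          2 * ε * (h₁ (x.1 + s * (y.1 - x.1)) (x.2 + s * (y.2 - x.2)) * (y.1 - x.1) +
            h₂ (x.1 + s * (y.1 - x.1)) (x.2 + s * (y.2 - x.2)) * (y.2 - x.2)))
        (f'' := fun s => (F₁'' (x.1 + s * (y.1 - x.1)) * (y.1 - x.1)) * (y.1 - x.1) +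
          (F₂'' (x.2 + s * (y.2 - x.2)) * (y.2 - x.2)) * (y.2 - x.2) +
          2 * ε * ((h₁₁ (x.1 + s * (y.1 - x.1)) (x.2 + s * (y.2 - x.2)) * (y.1 - x.1) +
              h₁₂ (x.1 + s * (y.1 - x.1)) (x.2 + s * (y.2 - x.2)) * (y.2 - x.2)) * (y.1 - x.1) +
            (h₂₁ (x.1 + s * (y.1 - x.1)) (x.2 + s * (y.2 - x.2)) * (y.1 - x.1) +
              h₂₂ (x.1 + s * (y.1 - x.1)) (x.2 + s * (y.2 - x.2)) * (y.2 - x.2)) * (y.2 - x.2)))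
        ?_ ?_ ?_ <;> intro s hs <;> rw [interior_Icc] at hs
      · exact (hg' s hs).hasDerivWithinAt
      · exact (hg'' s hs).hasDerivWithinAt
      · have h1 := hging s hs
        have h2 := hFnn s hs
        nlinarith [mul_nonneg (by linarith : (0:ℝ) ≤ 1 - 2 * ε * (κ₁₁ + κ₁₂ + κ₂₁ + κ₂₂)) h2]
    · intro hεlt hP1 hP2 hne
      have hKlt : 2 * ε * (κ₁₁ + κ₁₂ + κ₂₁ + κ₂₂) < 1 := by
        have h2K : (0:ℝ) < 2 * (κ₁₁ + κ₁₂ + κ₂₁ + κ₂₂) := by positivity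
        have := mul_lt_mul_of_pos_right hεlt h2K
        rw [one_div, inv_mul_cancel₀ (ne_of_gt h2K)] at this
        linarith
      have hune : y.1 - x.1 ≠ 0 ∨ y.2 - x.2 ≠ 0 := by
        by_contra hcon
        push_neg at hcon
        exact hne (Prod.ext (by linarith [sub_eq_zero.1 hcon.1]) (by
          linarith [sub_eq_zero.1 hcon.2])).symm
      refine strictConvexOn_aux (convex_Icc 0 1) hgc
        (f' := fun s => F₁' (x.1 + s * (y.1 - x.1)) * (y.1 - x.1) +
          F₂' (x.2 + s * (y.2 - x.2)) * (y.2 - x.2) +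
          2 * ε * (h₁ (x.1 + s * (y.1 - x.1)) (x.2 + s * (y.2 - x.2)) * (y.1 - x.1) +
            h₂ (x.1 + s * (y.1 - x.1)) (x.2 + s * (y.2 - x.2)) * (y.2 - x.2)))
        (f'' := fun s => (F₁'' (x.1 + s * (y.1 - x.1)) * (y.1 - x.1)) * (y.1 - x.1) +
          (F₂'' (x.2 + s * (y.2 - x.2)) * (y.2 - x.2)) * (y.2 - x.2) +
          2 * ε * ((h₁₁ (x.1 + s * (y.1 - x.1)) (x.2 + s * (y.2 - x.2)) * (y.1 - x.1) +
              h₁₂ (x.1 + s * (y.1 - x.1)) (x.2 + s * (y.2 - x.2)) * (y.2 - x.2)) * (y.1 - x.1) +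
            (h₂₁ (x.1 + s * (y.1 - x.1)) (x.2 + s * (y.2 - x.2)) * (y.1 - x.1) +
              h₂₂ (x.1 + s * (y.1 - x.1)) (x.2 + s * (y.2 - x.2)) * (y.2 - x.2)) * (y.2 - x.2)))
        ?_ ?_ ?_ <;> intro s hs <;> rw [interior_Icc] at hs
      · exact hg' s hs
      · exact hg'' s hs
      · have h1 := hging s hs
        obtain ⟨p1, p2⟩ := hzo s hs
        have hpos : 0 < (y.1 - x.1) ^ 2 * F₁'' (x.1 + s * (y.1 - x.1)) +
            (y.2 - x.2) ^ 2 * F₂'' (x.2 + s * (y.2 - x.2)) := by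
          rcases hune with hu | hu
          · have hF := hP1 _ p1
            have hsq : 0 < (y.1 - x.1) * (y.1 - x.1) := mul_self_pos.2 hu
            have hnn2 : 0 ≤ (y.2 - x.2) ^ 2 * F₂'' (x.2 + s * (y.2 - x.2)) :=
              mul_nonneg (sq_nonneg _) (hF₂''nn _ p2.le)
            nlinarith [mul_pos hsq hF]
          · have hF := hP2 _ p2
            have hsq : 0 < (y.2 - x.2) * (y.2 - x.2) := mul_self_pos.2 hu
            have hnn1 : 0 ≤ (y.1 - x.1) ^ 2 * F₁'' (x.1 + s * (y.1 - x.1)) :=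
              mul_nonneg (sq_nonneg _) (hF₁''nn _ p1.le)
            nlinarith [mul_pos hsq hF]
        nlinarith [mul_pos (by linarith : (0:ℝ) < 1 - 2 * ε * (κ₁₁ + κ₁₂ + κ₂₁ + κ₂₂)) hpos]
  -- putting everything together
  constructor
  · refine ⟨hQ, fun x hx y hy a b ha hb hab => ?_⟩
    by_cases hcase1 : x.1 = 0 ∧ y.1 = 0
    · obtain ⟨hx1, hy1⟩ := hcase1
      have hx2 : (0:ℝ) ≤ x.2 := hx.2
      have hy2 : (0:ℝ) ≤ y.2 := hy.2
      have hcomb : (0:ℝ) ≤ a * x.2 + b * y.2 :=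
        add_nonneg (mul_nonneg ha hx2) (mul_nonneg hb hy2)
      have hpt : a • x + b • y = ((0 : ℝ), a * x.2 + b * y.2) := by
        rw [Prod.ext_iff]
        constructor
        · simp [Prod.fst_add, Prod.smul_fst, smul_eq_mul, hx1, hy1]
        · simp [Prod.snd_add, Prod.smul_snd, smul_eq_mul]
      rw [hpt]
      simp only [smul_eq_mul]
      rw [hF₁0, (hbdry _ hcomb).2.1]
      have hvx : h x.1 x.2 = 0 := by rw [hx1]; exact (hbdry _ hx2).2.1
      have hvy : h y.1 y.2 = 0 := by rw [hy1]; exact (hbdry _ hy2).2.1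
      have hFx : F₁ x.1 = 0 := by rw [hx1, hF₁0]
      have hFy : F₁ y.1 = 0 := by rw [hy1, hF₁0]
      have hcv := hF₂cvx.2 hx2 hy2 ha hb hab
      simp only [smul_eq_mul] at hcv
      rw [hvx, hvy, hFx, hFy]
      ring_nf
      ring_nf at hcv
      linarith
    · by_cases hcase2 : x.2 = 0 ∧ y.2 = 0
      · obtain ⟨hx2', hy2'⟩ := hcase2
        have hx1 : (0:ℝ) ≤ x.1 := hx.1
        have hy1 : (0:ℝ) ≤ y.1 := hy.1
        have hcomb : (0:ℝ) ≤ a * x.1 + b * y.1 :=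
          add_nonneg (mul_nonneg ha hx1) (mul_nonneg hb hy1)
        have hpt : a • x + b • y = ((a * x.1 + b * y.1 : ℝ), (0 : ℝ)) := by
          rw [Prod.ext_iff]
          constructor
          · simp [Prod.fst_add, Prod.smul_fst, smul_eq_mul]
          · simp [Prod.snd_add, Prod.smul_snd, smul_eq_mul, hx2', hy2']
        rw [hpt]
        simp only [smul_eq_mul]
        rw [hF₂0, (hbdry _ hcomb).1]
        have hvx : h x.1 x.2 = 0 := by rw [hx2']; exact (hbdry _ hx1).1
        have hvy : h y.1 y.2 = 0 := by rw [hy2']; exact (hbdry _ hy1).1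
        have hFx : F₂ x.2 = 0 := by rw [hx2', hF₂0]
        have hFy : F₂ y.2 = 0 := by rw [hy2', hF₂0]
        have hcv := hF₁cvx.2 hx1 hy1 ha hb hab
        simp only [smul_eq_mul] at hcv
        rw [hvx, hvy, hFx, hFy]
        ring_nf
        ring_nf at hcv
        linarith
      · have hcv := (core x hx y hy hcase1 hcase2).1
        have h01 : (0:ℝ) ∈ Set.Icc (0:ℝ) 1 := by norm_num
        have h11 : (1:ℝ) ∈ Set.Icc (0:ℝ) 1 := by norm_num
        have hseg := hcv.2 h01 h11 ha hb hab
        simp only [smul_eq_mul, mul_zero, mul_one, zero_add, zero_mul, add_zero, one_mul] at hseg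
        have ey1 : x.1 + (y.1 - x.1) = y.1 := by ring
        have ey2 : x.2 + (y.2 - x.2) = y.2 := by ring
        rw [ey1, ey2] at hseg
        have hpt : a • x + b • y = ((x.1 + b * (y.1 - x.1) : ℝ), (x.2 + b * (y.2 - x.2) : ℝ)) := by
          have ha' : a = 1 - b := by linarith
          subst ha'
          rw [Prod.ext_iff]
          constructor
          · simp only [Prod.fst_add, Prod.smul_fst, smul_eq_mul]; ring
          · simp only [Prod.snd_add, Prod.smul_snd, smul_eq_mul]; ring
        rw [hpt]
        simp only [smul_eq_mul]
        linarith
  · intro hεlt hP1 hP2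
    refine ⟨hQ, fun x hx y hy hne a b ha hb hab => ?_⟩
    by_cases hcase1 : x.1 = 0 ∧ y.1 = 0
    · obtain ⟨hx1, hy1⟩ := hcase1
      have hx2 : (0:ℝ) ≤ x.2 := hx.2
      have hy2 : (0:ℝ) ≤ y.2 := hy.2
      have hne2 : x.2 ≠ y.2 := by
        intro hcon
        exact hne (Prod.ext (hx1.trans hy1.symm) hcon)
      have hF₂scvx : StrictConvexOn ℝ (Set.Ici (0:ℝ)) F₂ := by
        refine strictConvexOn_aux (convex_Ici 0) hF₂cont (f' := F₂') (f'' := F₂'')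
          ?_ ?_ ?_ <;> intro r hr <;> rw [interior_Ici] at hr
        · exact hF₂d r hr.le
        · exact hF₂'d r hr.le
        · exact hP2 r hr
      have hcomb : (0:ℝ) ≤ a * x.2 + b * y.2 :=
        add_nonneg (mul_nonneg ha.le hx2) (mul_nonneg hb.le hy2)
      have hpt : a • x + b • y = ((0 : ℝ), a * x.2 + b * y.2) := by
        rw [Prod.ext_iff]
        constructor
        · simp [Prod.fst_add, Prod.smul_fst, smul_eq_mul, hx1, hy1]
        · simp [Prod.snd_add, Prod.smul_snd, smul_eq_mul]
      rw [hpt]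
      simp only [smul_eq_mul]
      rw [hF₁0, (hbdry _ hcomb).2.1]
      have hvx : h x.1 x.2 = 0 := by rw [hx1]; exact (hbdry _ hx2).2.1
      have hvy : h y.1 y.2 = 0 := by rw [hy1]; exact (hbdry _ hy2).2.1
      have hFx : F₁ x.1 = 0 := by rw [hx1, hF₁0]
      have hFy : F₁ y.1 = 0 := by rw [hy1, hF₁0]
      have hcv := hF₂scvx.2 hx2 hy2 hne2 ha hb hab
      simp only [smul_eq_mul] at hcv
      rw [hvx, hvy, hFx, hFy]
      ring_nf
      ring_nf at hcv
      linarith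
    · by_cases hcase2 : x.2 = 0 ∧ y.2 = 0
      · obtain ⟨hx2', hy2'⟩ := hcase2
        have hx1 : (0:ℝ) ≤ x.1 := hx.1
        have hy1 : (0:ℝ) ≤ y.1 := hy.1
        have hne1 : x.1 ≠ y.1 := by
          intro hcon
          exact hne (Prod.ext hcon (hx2'.trans hy2'.symm))
        have hF₁scvx : StrictConvexOn ℝ (Set.Ici (0:ℝ)) F₁ := by
          refine strictConvexOn_aux (convex_Ici 0) hF₁cont (f' := F₁') (f'' := F₁'')
            ?_ ?_ ?_ <;> intro r hr <;> rw [interior_Ici] at hr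
          · exact hF₁d r hr.le
          · exact hF₁'d r hr.le
          · exact hP1 r hr
        have hcomb : (0:ℝ) ≤ a * x.1 + b * y.1 :=
          add_nonneg (mul_nonneg ha.le hx1) (mul_nonneg hb.le hy1)
        have hpt : a • x + b • y = ((a * x.1 + b * y.1 : ℝ), (0 : ℝ)) := by
          rw [Prod.ext_iff]
          constructor
          · simp [Prod.fst_add, Prod.smul_fst, smul_eq_mul]
          · simp [Prod.snd_add, Prod.smul_snd, smul_eq_mul, hx2', hy2']
        rw [hpt]
        simp only [smul_eq_mul]
        rw [hF₂0, (hbdry _ hcomb).1]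
        have hvx : h x.1 x.2 = 0 := by rw [hx2']; exact (hbdry _ hx1).1
        have hvy : h y.1 y.2 = 0 := by rw [hy2']; exact (hbdry _ hy1).1
        have hFx : F₂ x.2 = 0 := by rw [hx2', hF₂0]
        have hFy : F₂ y.2 = 0 := by rw [hy2', hF₂0]
        have hcv := hF₁scvx.2 hx1 hy1 hne1 ha hb hab
        simp only [smul_eq_mul] at hcv
        rw [hvx, hvy, hFx, hFy]
        ring_nf
        ring_nf at hcv
        linarith
      · have hcv := (core x hx y hy hcase1 hcase2).2 hεlt hP1 hP2 hne
        have h01 : (0:ℝ) ∈ Set.Icc (0:ℝ) 1 := by norm_num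
        have h11 : (1:ℝ) ∈ Set.Icc (0:ℝ) 1 := by norm_num
        have hseg := hcv.2 h01 h11 (by norm_num : (0:ℝ) ≠ 1) ha hb hab
        simp only [smul_eq_mul, mul_zero, mul_one, zero_add, zero_mul, add_zero, one_mul] at hseg
        have ey1 : x.1 + (y.1 - x.1) = y.1 := by ring
        have ey2 : x.2 + (y.2 - x.2) = y.2 := by ring
        rw [ey1, ey2] at hseg
        have hpt : a • x + b • y = ((x.1 + b * (y.1 - x.1) : ℝ), (x.2 + b * (y.2 - x.2) : ℝ)) := by
          have ha' : a = 1 - b := by linarith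
          subst ha'
          rw [Prod.ext_iff]
          constructor
          · simp only [Prod.fst_add, Prod.smul_fst, smul_eq_mul]; ring
          · simp only [Prod.snd_add, Prod.smul_snd, smul_eq_mul]; ring
        rw [hpt]
        simp only [smul_eq_mul]
        linarith
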